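/- The cumulativity relation of ECC is well-founded on the set of normalisable terms: there is no infinite strictly decreasing sequence A_0 ≻ A_1 ≻ … in which every A_n has a normal form. -/

import Mathlib

namespace ECC

/-- Terms of Luo's Extended Calculus of Constructions, in de Bruijn representation. -/
inductive Term : Type
  | var   : ℕ → Term
  | prop  : Term
  | type  : ℕ → Term
  | pi    : Term → Term → Term
  | sigma : Term → Term → Term
  | lam   : Term → Term → Term
  | app   : Term → Term → Term
  | pair  : Term → Term → Term → Term   -- ⟨M, N⟩_B with type annotation B
  | proj1 : Term → Term
  | proj2 : Term → Term
deriving DecidableEq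

/-- Lift (shift by `d`) all de Bruijn indices ≥ `k`. -/
def lift (d : ℕ) : ℕ → Term → Term
  | k, .var n       => if n < k then .var n else .var (n + d)
  | _, .prop        => .prop
  | _, .type j      => .type j
  | k, .pi A B      => .pi (lift d k A) (lift d (k+1) B)
  | k, .sigma A B   => .sigma (lift d k A) (lift d (k+1) B)
  | k, .lam A M     => .lam (lift d k A) (lift d (k+1) M)
  | k, .app M N     => .app (lift d k M) (lift d k N)
  | k, .pair M N B  => .pair (lift d k M) (lift d k N) (lift d k B)
  | k, .proj1 M     => .proj1 (lift d k M)
  | k, .proj2 M     => .proj2 (lift d k M)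

/-- Capture-avoiding substitution `[N/x]A` of the term `N` for the variable `x` in `A`. -/
def subst (N : Term) : ℕ → Term → Term
  | k, .var n       => if n < k then .var n else if n = k then lift k 0 N else .var (n - 1)
  | _, .prop        => .prop
  | _, .type j      => .type j
  | k, .pi A B      => .pi (subst N k A) (subst N (k+1) B)
  | k, .sigma A B   => .sigma (subst N k A) (subst N (k+1) B)
  | k, .lam A M     => .lam (subst N k A) (subst N (k+1) M)
  | k, .app M M'    => .app (subst N k M) (subst N k M')
  | k, .pair M M' B => .pair (subst N k M) (subst N k M') (subst N k B)
  | k, .proj1 M     => .proj1 (subst N k M)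
  | k, .proj2 M     => .proj2 (subst N k M)

/-- `[N/x₀]B` : substitution for the outermost bound variable. -/
def subst0 (B N : Term) : Term := subst N 0 B

/-- One-step reduction (β together with the projection reductions, closed under all
term-formation congruences). -/
inductive Red : Term → Term → Prop
  | beta    : Red (.app (.lam A M) N) (subst0 M N)
  | pr1     : Red (.proj1 (.pair M N B)) M
  | pr2     : Red (.proj2 (.pair M N B)) N
  | piL     : Red A A' → Red (.pi A B) (.pi A' B)
  | piR     : Red B B' → Red (.pi A B) (.pi A B')
  | sigmaL  : Red A A' → Red (.sigma A B) (.sigma A' B)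
  | sigmaR  : Red B B' → Red (.sigma A B) (.sigma A B')
  | lamL    : Red A A' → Red (.lam A M) (.lam A' M)
  | lamR    : Red M M' → Red (.lam A M) (.lam A M')
  | appL    : Red M M' → Red (.app M N) (.app M' N)
  | appR    : Red N N' → Red (.app M N) (.app M N')
  | pairL   : Red M M' → Red (.pair M N B) (.pair M' N B)
  | pairR   : Red N N' → Red (.pair M N B) (.pair M N' B)
  | pairB   : Red B B' → Red (.pair M N B) (.pair M N B')
  | proj1C  : Red M M' → Red (.proj1 M) (.proj1 M')
  | proj2C  : Red M M' → Red (.proj2 M) (.proj2 M')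

/-- Conversion `≃` : the equivalence relation generated by reduction. -/
def Conv : Term → Term → Prop := Relation.EqvGen Red

/-- `A` has a normal form. -/
def HasNF (A : Term) : Prop :=
  ∃ B, Relation.ReflTransGen Red A B ∧ ∀ C, ¬ Red B C

/-- `𝒯` : the set of normalisable terms. -/
def Tset : Set Term := {A | HasNF A}

/-- Universes are `Prop` and the `Type_j`. -/
def IsUniv (T : Term) : Prop := T = .prop ∨ ∃ j, T = .type j

/-- The cumulativity relation `⪯` : the smallest preorder containing conversion,
the universe order, congruence for Π in the codomain, and congruence for Σ in both
components. -/
inductive Cum : Term → Term → Prop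
  | conv     : Conv A B → Cum A B
  | propType : Cum .prop (.type 0)
  | typeType : j ≤ k → Cum (.type j) (.type k)
  | pi       : Conv A A' → Cum B B' → Cum (.pi A B) (.pi A' B')
  | sigma    : Cum A A' → Cum B B' → Cum (.sigma A B) (.sigma A' B')
  | trans    : Cum A B → Cum B C → Cum A C

/-- The strict cumulativity relation `≺` : `A ⪯ B` and `A ≄ B`. -/
def SCum (A B : Term) : Prop := Cum A B ∧ ¬ Conv A B

/-- The stratified cumulativity relations `⪯ᵢ`. -/
inductive CumL : ℕ → Term → Term → Prop
  | conv     : Conv A B → CumL i A B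
  | propType : CumL i .prop (.type j)
  | typeType : j < k → CumL i (.type j) (.type k)
  | succ     : CumL i A B → CumL (i+1) A B
  | pi       : Conv M (.pi A B) → Conv N (.pi A' B') → Conv A A' → CumL i B B' →
               CumL (i+1) M N
  | sigma    : Conv M (.sigma A B) → Conv N (.sigma A' B') → CumL i A A' → CumL i B B' →
               CumL (i+1) M N

/-- Strict stratified cumulativity `≺ᵢ`. -/
def SCumL (i : ℕ) (A B : Term) : Prop := CumL i A B ∧ ¬ Conv A B

/-- Is the outermost symbol of a term Π or Σ? -/
def BinderHeaded : Term → Prop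
  | .pi _ _    => True
  | .sigma _ _ => True
  | _          => False

/-- The base stratum: normalisable terms not convertible to a binder-headed
normalisable term. -/
def Base : Set Term :=
  {T | HasNF T ∧ ¬ ∃ B, HasNF B ∧ BinderHeaded B ∧ Conv T B}

/-- The stratification `(Π_n, Σ_n)` of `𝒯`. -/
def Strata : ℕ → Set Term × Set Term
  | 0 => (Base, Base)
  | n+1 =>
    ({T | ∃ k l, ∃ _ : k + l = n, ∃ A B, HasNF (Term.pi A B) ∧ Conv T (Term.pi A B) ∧
        A ∈ (Strata k).1 ∪ (Strata k).2 ∧ B ∈ (Strata l).1 ∪ (Strata l).2},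
     {T | ∃ k l, ∃ _ : k + l = n, ∃ A B, HasNF (Term.sigma A B) ∧ Conv T (Term.sigma A B) ∧
        A ∈ (Strata k).1 ∪ (Strata k).2 ∧ B ∈ (Strata l).1 ∪ (Strata l).2})
termination_by n => n
decreasing_by all_goals omega

/-- The stratum `Π_n`. -/
def PiStr (n : ℕ) : Set Term := (Strata n).1

/-- The stratum `Σ_n`. -/
def SigStr (n : ℕ) : Set Term := (Strata n).2

/-- The specification of the rank function `φ : 𝒯 → ω`. -/
def PhiSpec (φ : Term → ℕ) : Prop :=
  (∀ M N, HasNF M → HasNF N → Conv M N → φ M = φ N) ∧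
  (∀ T, HasNF T → Conv T .prop → φ T = 2) ∧
  (∀ T j, HasNF T → Conv T (.type j) → φ T = 3 + j) ∧
  (∀ T, T ∈ PiStr 0 → ¬ Conv T .prop → (∀ j, ¬ Conv T (.type j)) → φ T = 1) ∧
  (∀ T A B, HasNF T → (Conv T (.pi A B) ∨ Conv T (.sigma A B)) → φ T = φ A * φ B) ∧
  (∀ T, HasNF T → 0 < φ T)

mutual
/-- Valid contexts of ECC (de Bruijn: the head of the list is the most recent entry). -/
inductive Valid : List Term → Prop
  | nil  : Valid []
  | cons : Typing Γ A (.type j) → Valid (A :: Γ)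

/-- The typing judgement `Γ ⊢ M : A` of ECC. -/
inductive Typing : List Term → Term → Term → Prop
  | prop  : Valid Γ → Typing Γ .prop (.type 0)
  | type  : Valid Γ → Typing Γ (.type j) (.type (j+1))
  | var   : Valid Γ → Γ[n]? = some A → Typing Γ (.var n) (lift (n+1) 0 A)
  | pi1   : Typing Γ A (.type j) → Typing (A :: Γ) B .prop →
            Typing Γ (.pi A B) .prop
  | pi2   : Typing Γ A (.type j) → Typing (A :: Γ) B (.type j) →
            Typing Γ (.pi A B) (.type j)
  | sig   : Typing Γ A (.type j) → Typing (A :: Γ) B (.type j) →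
            Typing Γ (.sigma A B) (.type j)
  | lam   : Typing (A :: Γ) M B → Typing Γ (.lam A M) (.pi A B)
  | app   : Typing Γ M (.pi A B) → Typing Γ N A → Typing Γ (.app M N) (subst0 B N)
  | pair  : Typing Γ M A → Typing Γ N (subst0 B M) → Typing (A :: Γ) B (.type j) →
            Typing Γ (.pair M N (.sigma A B)) (.sigma A B)
  | proj1 : Typing Γ M (.sigma A B) → Typing Γ (.proj1 M) A
  | proj2 : Typing Γ M (.sigma A B) → Typing Γ (.proj2 M) (subst0 B (.proj1 M))
  | cum   : Typing Γ M A → Typing Γ B (.type j) → Cum A B → Typing Γ M B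
end

/-- `Type_j` for `j ∈ ℤ`, with the convention `Type_{-1} = Prop`. -/
def TType (j : ℤ) : Term := if j < 0 then .prop else .type j.toNat

/-- The typing judgement of the restricted system `ECC⁻`: the rules
`(Π2)(Σ)(app)(pair)(⪯)` of ECC are replaced by `(Π2')(Σ')(app')(pair')` and `(≃)_ρ`. -/
inductive TypingM : List Term → Term → Term → Prop
  | prop  : Valid Γ → TypingM Γ .prop (.type 0)
  | type  : Valid Γ → TypingM Γ (.type j) (.type (j+1))
  | var   : Valid Γ → Γ[n]? = some A → TypingM Γ (.var n) (lift (n+1) 0 A)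
  | pi1   : TypingM Γ A (.type j) → TypingM (A :: Γ) B .prop →
            TypingM Γ (.pi A B) .prop
  | pi2'  : TypingM Γ A (TType j) → TypingM (A :: Γ) B (TType k) → 0 ≤ k →
            TypingM Γ (.pi A B) (TType (max (max j k) 0))
  | sig'  : TypingM Γ A (TType j) → TypingM (A :: Γ) B (TType k) →
            TypingM Γ (.sigma A B) (TType (max (max j k) 0))
  | lam   : TypingM (A :: Γ) M B → TypingM Γ (.lam A M) (.pi A B)
  | app'  : TypingM Γ M (.pi A B) → TypingM Γ N A' → Cum A' A →
            TypingM Γ (.app M N) (subst0 B N)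
  | pair' : TypingM Γ M A → TypingM Γ N C → TypingM (A' :: Γ) B' (.type j) →
            Cum A A' → Cum C (subst0 B' M) →
            TypingM Γ (.pair M N (.sigma A' B')) (.sigma A' B')
  | proj1 : TypingM Γ M (.sigma A B) → TypingM Γ (.proj1 M) A
  | proj2 : TypingM Γ M (.sigma A B) → TypingM Γ (.proj2 M) (subst0 B (.proj1 M))
  | conv  : TypingM Γ M A → Conv A A' → Typing Γ A' (.type j) → TypingM Γ M A'

lemma lift_lift_comm (d j : ℕ) (N : Term) : ∀ k i, i ≤ k →
    lift d (k + j) (lift j i N) = lift j i (lift d k N) := by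
  induction N with
  | var n =>
    intro k i h
    simp only [lift]
    split_ifs <;> simp only [lift] <;> split_ifs <;> first | rfl | omega | (congr 1; omega)
  | prop => intros; rfl
  | type => intros; rfl
  | _ =>
    intro k i h
    simp only [lift, Nat.add_right_comm _ _ 1]
    congr 1 <;> apply_assumption <;> omega

lemma lift_lift_add (j e : ℕ) (N : Term) : ∀ l i, l ≤ i → i ≤ l + e →
    lift j i (lift e l N) = lift (j + e) l N := by
  induction N with
  | var n =>
    intro l i h1 h2
    simp only [lift]
    split_ifs <;> simp only [lift] <;> split_ifs <;> first | rfl | omega | (congr 1; omega)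
  | prop => intros; rfl
  | type => intros; rfl
  | _ =>
    intro l i h1 h2
    simp only [lift]
    congr 1 <;> apply_assumption <;> omega

lemma lift_subst (d : ℕ) (N M : Term) : ∀ j m,
    lift d (j + m) (subst N j M) = subst (lift d m N) j (lift d (j + m + 1) M) := by
  induction M with
  | var n =>
    intro j m
    simp only [lift, subst]
    split_ifs <;> simp only [lift, subst] <;> split_ifs <;>
      first
      | rfl | omega | (congr 1; omega)
      | (rw [show j + m = m + j by omega]; exact lift_lift_comm d j N m 0 (Nat.zero_le m))
  | prop => intros; rfl
  | type => intros; rfl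
  | _ =>
    intro j m
    simp only [lift, subst]
    congr 1 <;>
      first
      | apply_assumption
      | (rw [show j + m + 1 = j + 1 + m by omega]; apply_assumption)

lemma subst_lift (N Q : Term) (j : ℕ) : ∀ m i, i ≤ m →
    subst N (j + m) (lift j i Q) = lift j i (subst N m Q) := by
  induction Q with
  | var n =>
    intro m i h
    simp only [lift, subst]
    split_ifs <;> simp only [lift, subst] <;> split_ifs <;>
      first
      | rfl | omega | (congr 1; omega)
      | (rw [lift_lift_add j m N 0 i (Nat.zero_le i) (by omega)]; try (congr 1; omega))
      | (exfalso; omega)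
  | prop => intros; rfl
  | type => intros; rfl
  | _ =>
    intro m i h
    simp only [lift, subst]
    congr 1 <;>
      first
      | (apply_assumption; omega)
      | (rw [show j + m + 1 = j + (m + 1) by omega]; apply_assumption; omega)

lemma subst_lift_cancel (X N : Term) (e : ℕ) : ∀ k j, k ≤ j → j ≤ k + e →
    subst X j (lift (e + 1) k N) = lift e k N := by
  induction N with
  | var n =>
    intro k j h1 h2
    simp only [lift, subst]
    split_ifs <;> simp only [lift, subst] <;> split_ifs <;> first | rfl | omega | (congr 1; omega)
  | prop => intros; rfl
  | type => intros; rfl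
  | _ =>
    intro k j h1 h2
    simp only [lift, subst]
    congr 1 <;> apply_assumption <;> omega

lemma subst_subst (N Q P : Term) : ∀ j m,
    subst N (j + m) (subst Q j P) = subst (subst N m Q) j (subst N (j + m + 1) P) := by
  induction P with
  | var n =>
    intro j m
    simp only [subst]
    split_ifs <;> (try simp only [lift, subst]) <;> (try split_ifs) <;>
      first
      | rfl | omega | (congr 1; omega) | (exfalso; omega)
      | exact subst_lift N Q j m 0 (Nat.zero_le m)
      | (rw [subst_lift_cancel (subst N m Q) N (j + m) 0 j (Nat.zero_le j) (by omega)]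
         try (congr 1; omega))
  | prop => intros; rfl
  | type => intros; rfl
  | _ =>
    intro j m
    simp only [subst]
    congr 1 <;>
      first
      | apply_assumption
      | (rw [show j + m + 1 = j + 1 + m by omega]; apply_assumption)

abbrev Reds : Term → Term → Prop := Relation.ReflTransGen Red

lemma lift_subst0 (d k : ℕ) (M N : Term) :
    lift d k (subst0 M N) = subst0 (lift d (k+1) M) (lift d k N) := by
  have := lift_subst d N M 0 k
  simpa [subst0] using this

lemma subst_subst0 (N M P : Term) (k : ℕ) :
    subst N k (subst0 M P) = subst0 (subst N (k+1) M) (subst N k P) := by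
  have := subst_subst N P M 0 k
  simpa [subst0] using this

/-- Parallel reduction. -/
inductive Par : Term → Term → Prop
  | var   : Par (.var n) (.var n)
  | prop  : Par .prop .prop
  | type  : Par (.type j) (.type j)
  | pi    : Par A A' → Par B B' → Par (.pi A B) (.pi A' B')
  | sigma : Par A A' → Par B B' → Par (.sigma A B) (.sigma A' B')
  | lam   : Par A A' → Par M M' → Par (.lam A M) (.lam A' M')
  | app   : Par M M' → Par N N' → Par (.app M N) (.app M' N')
  | pair  : Par M M' → Par N N' → Par B B' → Par (.pair M N B) (.pair M' N' B')
  | proj1 : Par M M' → Par (.proj1 M) (.proj1 M')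
  | proj2 : Par M M' → Par (.proj2 M) (.proj2 M')
  | beta  : Par M M' → Par N N' → Par (.app (.lam A M) N) (subst0 M' N')
  | pr1   : Par M M' → Par (.proj1 (.pair M N B)) M'
  | pr2   : Par N N' → Par (.proj2 (.pair M N B)) N'

lemma par_refl : ∀ M : Term, Par M M := by
  intro M; induction M <;> constructor <;> assumption

lemma red_par {M N : Term} (h : Red M N) : Par M N := by
  induction h <;> constructor <;> first | assumption | exact par_refl _

lemma reds_congr1 {f : Term → Term} (hf : ∀ x y, Red x y → Red (f x) (f y))
    {a b : Term} (h : Reds a b) : Reds (f a) (f b) := by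
  induction h with
  | refl => exact Relation.ReflTransGen.refl
  | tail _ h2 ih => exact ih.tail (hf _ _ h2)

lemma par_reds {M N : Term} (h : Par M N) : Reds M N := by
  induction h with
  | var => exact .refl
  | prop => exact .refl
  | type => exact .refl
  | pi h1 h2 ih1 ih2 =>
      exact (reds_congr1 (fun _ _ => Red.piL) ih1).trans
        (reds_congr1 (fun _ _ => Red.piR) ih2)
  | sigma h1 h2 ih1 ih2 =>
      exact (reds_congr1 (fun _ _ => Red.sigmaL) ih1).trans
        (reds_congr1 (fun _ _ => Red.sigmaR) ih2)
  | lam h1 h2 ih1 ih2 =>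
      exact (reds_congr1 (fun _ _ => Red.lamL) ih1).trans
        (reds_congr1 (fun _ _ => Red.lamR) ih2)
  | app h1 h2 ih1 ih2 =>
      exact (reds_congr1 (fun _ _ => Red.appL) ih1).trans
        (reds_congr1 (fun _ _ => Red.appR) ih2)
  | pair h1 h2 h3 ih1 ih2 ih3 =>
      exact ((reds_congr1 (fun _ _ => Red.pairL) ih1).trans
        (reds_congr1 (fun _ _ => Red.pairR) ih2)).trans
        (reds_congr1 (fun _ _ => Red.pairB) ih3)
  | proj1 h ih => exact reds_congr1 (fun _ _ => Red.proj1C) ih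
  | proj2 h ih => exact reds_congr1 (fun _ _ => Red.proj2C) ih
  | beta h1 h2 ih1 ih2 =>
      exact Relation.ReflTransGen.tail
        ((reds_congr1 (fun _ _ h => Red.appL (Red.lamR h)) ih1).trans
         (reds_congr1 (fun _ _ => Red.appR) ih2)) Red.beta
  | pr1 h ih =>
      exact (reds_congr1 (fun _ _ h => Red.proj1C (Red.pairL h)) ih).trans
        (Relation.ReflTransGen.single Red.pr1)
  | pr2 h ih =>
      exact (reds_congr1 (fun _ _ h => Red.proj2C (Red.pairR h)) ih).trans
        (Relation.ReflTransGen.single Red.pr2)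

lemma par_lift {M M' : Term} (h : Par M M') : ∀ d k, Par (lift d k M) (lift d k M') := by
  induction h with
  | var =>
      intro d k; simp only [lift]; split_ifs <;> exact Par.var
  | beta h1 h2 ih1 ih2 =>
      intro d k
      rw [lift_subst0]
      exact Par.beta (ih1 d (k+1)) (ih2 d k)
  | pr1 h ih => intro d k; exact Par.pr1 (ih d k)
  | pr2 h ih => intro d k; exact Par.pr2 (ih d k)
  | _ => intro d k; simp only [lift]; constructor <;> apply_assumption

lemma par_subst {N N' M M' : Term} (hN : Par N N') (h : Par M M') :
    ∀ k, Par (subst N k M) (subst N' k M') := by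
  induction h with
  | var =>
      intro k; simp only [subst]; split_ifs
      · exact Par.var
      · exact par_lift hN _ _
      · exact Par.var
  | beta h1 h2 ih1 ih2 =>
      intro k
      rw [subst_subst0]
      simp only [subst]
      exact Par.beta (ih1 (k+1)) (ih2 k)
  | pr1 h ih => intro k; exact Par.pr1 (ih k)
  | pr2 h ih => intro k; exact Par.pr2 (ih k)
  | _ => intro k; simp only [subst]; constructor <;> apply_assumption

/-- Complete development (Takahashi). -/
def dev : Term → Term
  | .var n => .var n
  | .prop => .prop
  | .type j => .type j
  | .pi A B => .pi (dev A) (dev B)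
  | .sigma A B => .sigma (dev A) (dev B)
  | .lam A M => .lam (dev A) (dev M)
  | .app (.lam _ M) N => subst0 (dev M) (dev N)
  | .app M N => .app (dev M) (dev N)
  | .pair M N B => .pair (dev M) (dev N) (dev B)
  | .proj1 (.pair M _ _) => dev M
  | .proj1 M => .proj1 (dev M)
  | .proj2 (.pair _ N _) => dev N
  | .proj2 M => .proj2 (dev M)

lemma par_lam_inv {A M X : Term} (h : Par (.lam A M) X) :
    ∃ A' M', X = .lam A' M' ∧ Par A A' ∧ Par M M' := by
  cases h with
  | lam h1 h2 => exact ⟨_, _, rfl, h1, h2⟩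

lemma par_pair_inv {M N B X : Term} (h : Par (.pair M N B) X) :
    ∃ M' N' B', X = .pair M' N' B' ∧ Par M M' ∧ Par N N' ∧ Par B B' := by
  cases h with
  | pair h1 h2 h3 => exact ⟨_, _, _, rfl, h1, h2, h3⟩

lemma triangle {M N : Term} (h : Par M N) : Par N (dev M) := by
  induction h with
  | var => exact Par.var
  | prop => exact Par.prop
  | type => exact Par.type
  | pi h1 h2 ih1 ih2 => exact Par.pi ih1 ih2
  | sigma h1 h2 ih1 ih2 => exact Par.sigma ih1 ih2
  | lam h1 h2 ih1 ih2 => exact Par.lam ih1 ih2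
  | @app M M' N N' h1 h2 ih1 ih2 =>
      cases M with
      | lam A P =>
          obtain ⟨A', P', rfl, hA, hP⟩ := par_lam_inv h1
          obtain ⟨A₀, P₀, hEq, hA0, hP0⟩ := par_lam_inv ih1
          simp only [dev]
          cases hEq
          exact Par.beta hP0 ih2
      | _ => first
          | exact Par.app ih1 ih2
          | (simp only [dev]; exact Par.app ih1 ih2)
  | @pair M M' N N' B B' h1 h2 h3 ih1 ih2 ih3 => exact Par.pair ih1 ih2 ih3
  | @proj1 M M' h ih =>
      cases M with
      | pair P Q B =>
          obtain ⟨P', Q', B', rfl, hP, hQ, hB⟩ := par_pair_inv h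
          obtain ⟨P₀, Q₀, B₀, hEq, hP0, hQ0, hB0⟩ := par_pair_inv ih
          simp only [dev]
          cases hEq
          exact Par.pr1 hP0
      | _ => first
          | exact Par.proj1 ih
          | (simp only [dev]; exact Par.proj1 ih)
  | @proj2 M M' h ih =>
      cases M with
      | pair P Q B =>
          obtain ⟨P', Q', B', rfl, hP, hQ, hB⟩ := par_pair_inv h
          obtain ⟨P₀, Q₀, B₀, hEq, hP0, hQ0, hB0⟩ := par_pair_inv ih
          simp only [dev]
          cases hEq
          exact Par.pr2 hQ0
      | _ => first
          | exact Par.proj2 ih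
          | (simp only [dev]; exact Par.proj2 ih)
  | @beta M M' N N' A h1 h2 ih1 ih2 =>
      simp only [dev]
      exact par_subst ih2 ih1 0
  | @pr1 M M' N B h ih =>
      simp only [dev]
      exact ih
  | @pr2 N N' M B h ih =>
      simp only [dev]
      exact ih

lemma reds_iff_pars {M N : Term} : Reds M N ↔ Relation.ReflTransGen Par M N := by
  constructor
  · exact fun h' => Relation.ReflTransGen.mono (fun _ _ h => red_par h) _ _ h'
  · intro h
    have : Relation.ReflTransGen Reds M N :=
      Relation.ReflTransGen.mono (fun _ _ h => par_reds h) _ _ h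
    rwa [Relation.reflTransGen_idem] at this

/-- Confluence of reduction. -/
lemma confluence {M X Y : Term} (h1 : Reds M X) (h2 : Reds M Y) :
    ∃ Z, Reds X Z ∧ Reds Y Z := by
  have key : ∀ a b c : Term, Par a b → Par a c →
      ∃ d, Relation.ReflGen Par b d ∧ Relation.ReflTransGen Par c d := by
    intro a b c hab hac
    exact ⟨dev a, Relation.ReflGen.single (triangle hab),
      Relation.ReflTransGen.single (triangle hac)⟩
  have := Relation.church_rosser key (reds_iff_pars.1 h1) (reds_iff_pars.1 h2)
  obtain ⟨Z, hZ1, hZ2⟩ := this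
  exact ⟨Z, reds_iff_pars.2 hZ1, reds_iff_pars.2 hZ2⟩

lemma conv_of_reds {M N : Term} (h : Reds M N) : Conv M N := by
  induction h with
  | refl => exact Relation.EqvGen.refl _
  | tail _ h2 ih => exact Relation.EqvGen.trans _ _ _ ih (Relation.EqvGen.rel _ _ h2)

/-- Church–Rosser: convertible terms are joinable. -/
lemma conv_join {M N : Term} (h : Conv M N) : ∃ Z, Reds M Z ∧ Reds N Z := by
  induction h with
  | rel a b h => exact ⟨b, Relation.ReflTransGen.single h, Relation.ReflTransGen.refl⟩
  | refl a => exact ⟨a, Relation.ReflTransGen.refl, Relation.ReflTransGen.refl⟩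
  | symm a b _ ih => obtain ⟨Z, h1, h2⟩ := ih; exact ⟨Z, h2, h1⟩
  | trans a b c _ _ ih1 ih2 =>
      obtain ⟨Z1, ha, hb1⟩ := ih1
      obtain ⟨Z2, hb2, hc⟩ := ih2
      obtain ⟨Z, hz1, hz2⟩ := confluence hb1 hb2
      exact ⟨Z, ha.trans hz1, hc.trans hz2⟩

/-- Normal terms. -/
def Normal (T : Term) : Prop := ∀ C, ¬ Red T C

lemma normal_of_reds {M N : Term} (hM : Normal M) (h : Reds M N) : N = M := by
  rcases h.cases_head with rfl | ⟨c, hc, _⟩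
  · rfl
  · exact absurd hc (hM c)

lemma nf_unique {M N : Term} (h : Conv M N) (hM : Normal M) (hN : Normal N) : M = N := by
  obtain ⟨Z, h1, h2⟩ := conv_join h
  rw [← normal_of_reds hM h1, ← normal_of_reds hN h2]

lemma conv_congr {f : Term → Term} (hf : ∀ x y, Red x y → Red (f x) (f y))
    {a b : Term} (h : Conv a b) : Conv (f a) (f b) := by
  induction h with
  | rel a b h => exact Relation.EqvGen.rel _ _ (hf _ _ h)
  | refl a => exact Relation.EqvGen.refl _
  | symm a b _ ih => exact Relation.EqvGen.symm _ _ ih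
  | trans a b c _ _ ih1 ih2 => exact Relation.EqvGen.trans _ _ _ ih1 ih2

lemma conv_pi {A A' B B' : Term} (hA : Conv A A') (hB : Conv B B') :
    Conv (.pi A B) (.pi A' B') :=
  Relation.EqvGen.trans _ _ _
    (conv_congr (fun _ _ => Red.piL) hA) (conv_congr (fun _ _ => Red.piR) hB)

lemma conv_sigma {A A' B B' : Term} (hA : Conv A A') (hB : Conv B B') :
    Conv (.sigma A B) (.sigma A' B') :=
  Relation.EqvGen.trans _ _ _
    (conv_congr (fun _ _ => Red.sigmaL) hA) (conv_congr (fun _ _ => Red.sigmaR) hB)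

lemma reds_pi_inv {A B X : Term} (h : Reds (.pi A B) X) :
    ∃ A' B', X = .pi A' B' ∧ Reds A A' ∧ Reds B B' := by
  induction h with
  | refl => exact ⟨A, B, rfl, .refl, .refl⟩
  | tail _ h2 ih =>
      obtain ⟨A', B', rfl, hA, hB⟩ := ih
      cases h2 with
      | piL h => exact ⟨_, _, rfl, hA.tail h, hB⟩
      | piR h => exact ⟨_, _, rfl, hA, hB.tail h⟩

lemma reds_sigma_inv {A B X : Term} (h : Reds (.sigma A B) X) :
    ∃ A' B', X = .sigma A' B' ∧ Reds A A' ∧ Reds B B' := by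
  induction h with
  | refl => exact ⟨A, B, rfl, .refl, .refl⟩
  | tail _ h2 ih =>
      obtain ⟨A', B', rfl, hA, hB⟩ := ih
      cases h2 with
      | sigmaL h => exact ⟨_, _, rfl, hA.tail h, hB⟩
      | sigmaR h => exact ⟨_, _, rfl, hA, hB.tail h⟩

lemma normal_prop : Normal .prop := by intro C h; cases h
lemma normal_type (j : ℕ) : Normal (.type j) := by intro C h; cases h

lemma normal_pi {A B : Term} (hA : Normal A) (hB : Normal B) : Normal (.pi A B) := by
  intro C h
  cases h with
  | piL h => exact hA _ h
  | piR h => exact hB _ h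

lemma normal_sigma {A B : Term} (hA : Normal A) (hB : Normal B) : Normal (.sigma A B) := by
  intro C h
  cases h with
  | sigmaL h => exact hA _ h
  | sigmaR h => exact hB _ h

lemma normal_pi_inv {A B : Term} (h : Normal (.pi A B)) : Normal A ∧ Normal B :=
  ⟨fun C hc => h _ (Red.piL hc), fun C hc => h _ (Red.piR hc)⟩

lemma normal_sigma_inv {A B : Term} (h : Normal (.sigma A B)) : Normal A ∧ Normal B :=
  ⟨fun C hc => h _ (Red.sigmaL hc), fun C hc => h _ (Red.sigmaR hc)⟩

/-- A term is "good" if it is convertible to a normal term. -/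
def Good (T : Term) : Prop := ∃ N, Conv T N ∧ Normal N

/-- The structural rank of a (normal) term. -/
def psi : Term → ℕ
  | .prop => 2
  | .type j => j + 3
  | .pi A B => psi A * psi B
  | .sigma A B => psi A * psi B
  | _ => 1

lemma psi_pos : ∀ T : Term, 1 ≤ psi T := by
  intro T
  induction T <;> simp only [psi] <;> first
    | omega
    | (apply Nat.one_le_iff_ne_zero.2; positivity)
    | exact le_refl 1

/-- The rank function, extended to all terms (zero outside good classes). -/
noncomputable def phi (T : Term) : ℕ :=
  @dite _ (Good T) (Classical.propDecidable _) (fun h => psi (Exists.choose h)) (fun _ => 0)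

lemma phi_eq {T N : Term} (h : Conv T N) (hN : Normal N) : phi T = psi N := by
  have hG : Good T := ⟨N, h, hN⟩
  rw [phi, dif_pos hG]
  have hspec := Exists.choose_spec hG
  have : Exists.choose hG = N :=
    nf_unique (Relation.EqvGen.trans _ _ _ (Relation.EqvGen.symm _ _ hspec.1) h) hspec.2 hN
  rw [this]

lemma phi_conv {T T' : Term} (h : Conv T T') : phi T = phi T' := by
  by_cases hG : Good T'
  · obtain ⟨N, h2, hN⟩ := hG
    rw [phi_eq (Relation.EqvGen.trans _ _ _ h h2) hN, phi_eq h2 hN]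
  · have hG' : ¬ Good T := by
      rintro ⟨N, h2, hN⟩
      exact hG ⟨N, Relation.EqvGen.trans _ _ _ (Relation.EqvGen.symm _ _ h) h2, hN⟩
    rw [phi, dif_neg hG', phi, dif_neg hG]

lemma phi_pos {T : Term} (h : Good T) : 1 ≤ phi T := by
  obtain ⟨N, h1, hN⟩ := h
  rw [phi_eq h1 hN]; exact psi_pos N

lemma good_prop : Good Term.prop := ⟨_, Relation.EqvGen.refl _, normal_prop⟩
lemma good_type (j : ℕ) : Good (Term.type j) := ⟨_, Relation.EqvGen.refl _, normal_type j⟩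

lemma phi_prop : phi .prop = 2 := phi_eq (Relation.EqvGen.refl _) normal_prop
lemma phi_type (j : ℕ) : phi (.type j) = j + 3 :=
  phi_eq (Relation.EqvGen.refl _) (normal_type j)

lemma phi_conv_prop {T : Term} (h : Conv T .prop) : phi T = 2 :=
  phi_eq h normal_prop

lemma good_pi_inv {A B : Term} (h : Good (.pi A B)) : Good A ∧ Good B := by
  obtain ⟨N, hc, hN⟩ := h
  obtain ⟨Z, h1, h2⟩ := conv_join hc
  obtain ⟨A', B', rfl, hA, hB⟩ := reds_pi_inv h1
  have hNZ : N = Term.pi A' B' := normal_of_reds hN h2 ▸ rfl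
  subst hNZ
  obtain ⟨nA, nB⟩ := normal_pi_inv hN
  exact ⟨⟨A', conv_of_reds hA, nA⟩, ⟨B', conv_of_reds hB, nB⟩⟩

lemma good_sigma_inv {A B : Term} (h : Good (.sigma A B)) : Good A ∧ Good B := by
  obtain ⟨N, hc, hN⟩ := h
  obtain ⟨Z, h1, h2⟩ := conv_join hc
  obtain ⟨A', B', rfl, hA, hB⟩ := reds_sigma_inv h1
  have hNZ : N = Term.sigma A' B' := normal_of_reds hN h2 ▸ rfl
  subst hNZ
  obtain ⟨nA, nB⟩ := normal_sigma_inv hN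
  exact ⟨⟨A', conv_of_reds hA, nA⟩, ⟨B', conv_of_reds hB, nB⟩⟩

lemma good_pi {A B : Term} (hA : Good A) (hB : Good B) : Good (.pi A B) := by
  obtain ⟨A', h1, n1⟩ := hA
  obtain ⟨B', h2, n2⟩ := hB
  exact ⟨.pi A' B', conv_pi h1 h2, normal_pi n1 n2⟩

lemma good_sigma {A B : Term} (hA : Good A) (hB : Good B) : Good (.sigma A B) := by
  obtain ⟨A', h1, n1⟩ := hA
  obtain ⟨B', h2, n2⟩ := hB
  exact ⟨.sigma A' B', conv_sigma h1 h2, normal_sigma n1 n2⟩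

lemma phi_pi {A B : Term} (hA : Good A) (hB : Good B) :
    phi (.pi A B) = phi A * phi B := by
  obtain ⟨A', h1, n1⟩ := hA
  obtain ⟨B', h2, n2⟩ := hB
  rw [phi_eq (conv_pi h1 h2) (normal_pi n1 n2), phi_eq h1 n1, phi_eq h2 n2]
  rfl

lemma phi_sigma {A B : Term} (hA : Good A) (hB : Good B) :
    phi (.sigma A B) = phi A * phi B := by
  obtain ⟨A', h1, n1⟩ := hA
  obtain ⟨B', h2, n2⟩ := hB
  rw [phi_eq (conv_sigma h1 h2) (normal_sigma n1 n2), phi_eq h1 n1, phi_eq h2 n2]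
  rfl

lemma cum_key {A B : Term} (h : Cum A B) :
    (Good A ↔ Good B) ∧ phi A ≤ phi B ∧ (Good A → phi A = phi B → Conv A B) := by
  induction h with
  | conv h =>
      refine ⟨?_, le_of_eq (phi_conv h), fun _ _ => h⟩
      constructor
      · rintro ⟨N, h1, hN⟩
        exact ⟨N, Relation.EqvGen.trans _ _ _ (Relation.EqvGen.symm _ _ h) h1, hN⟩
      · rintro ⟨N, h1, hN⟩
        exact ⟨N, Relation.EqvGen.trans _ _ _ h h1, hN⟩
  | propType =>
      refine ⟨by simp [good_prop, good_type], ?_, ?_⟩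
      · rw [phi_prop, phi_type]; omega
      · intro _ h; rw [phi_prop, phi_type] at h; omega
  | @typeType j k hjk =>
      refine ⟨by simp [good_type], ?_, ?_⟩
      · rw [phi_type, phi_type]; omega
      · intro _ h
        rw [phi_type, phi_type] at h
        have : j = k := by omega
        subst this
        exact Relation.EqvGen.refl _
  | @pi A A' B B' hA hB ih =>
      obtain ⟨ihG, ihLe, ihConv⟩ := ih
      have hGA : Good A ↔ Good A' := by
        constructor
        · rintro ⟨N, h1, hN⟩
          exact ⟨N, Relation.EqvGen.trans _ _ _ (Relation.EqvGen.symm _ _ hA) h1, hN⟩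
        · rintro ⟨N, h1, hN⟩
          exact ⟨N, Relation.EqvGen.trans _ _ _ hA h1, hN⟩
      have hphiA : phi A = phi A' := phi_conv hA
      have hGiff : Good (.pi A B) ↔ Good (.pi A' B') := by
        constructor
        · intro h
          obtain ⟨h1, h2⟩ := good_pi_inv h
          exact good_pi (hGA.1 h1) (ihG.1 h2)
        · intro h
          obtain ⟨h1, h2⟩ := good_pi_inv h
          exact good_pi (hGA.2 h1) (ihG.2 h2)
      refine ⟨hGiff, ?_, ?_⟩
      · by_cases hG : Good (.pi A B)
        · obtain ⟨h1, h2⟩ := good_pi_inv hG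
          rw [phi_pi h1 h2, phi_pi (hGA.1 h1) (ihG.1 h2), ← hphiA]
          exact Nat.mul_le_mul_left _ ihLe
        · rw [phi, dif_neg hG]; omega
      · intro hG heq
        obtain ⟨h1, h2⟩ := good_pi_inv hG
        rw [phi_pi h1 h2, phi_pi (hGA.1 h1) (ihG.1 h2), ← hphiA] at heq
        have hposA : 1 ≤ phi A := phi_pos h1
        have : phi B = phi B' := by
          rcases Nat.lt_or_ge (phi B) (phi B') with hlt | hge
          · exfalso; nlinarith
          · omega
        exact conv_pi hA (ihConv h2 this)
  | @sigma A A' B B' hA hB ihA ihB =>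
      obtain ⟨ihGA, ihLeA, ihConvA⟩ := ihA
      obtain ⟨ihGB, ihLeB, ihConvB⟩ := ihB
      have hGiff : Good (.sigma A B) ↔ Good (.sigma A' B') := by
        constructor
        · intro h
          obtain ⟨h1, h2⟩ := good_sigma_inv h
          exact good_sigma (ihGA.1 h1) (ihGB.1 h2)
        · intro h
          obtain ⟨h1, h2⟩ := good_sigma_inv h
          exact good_sigma (ihGA.2 h1) (ihGB.2 h2)
      refine ⟨hGiff, ?_, ?_⟩
      · by_cases hG : Good (.sigma A B)
        · obtain ⟨h1, h2⟩ := good_sigma_inv hG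
          rw [phi_sigma h1 h2, phi_sigma (ihGA.1 h1) (ihGB.1 h2)]
          exact Nat.mul_le_mul ihLeA ihLeB
        · rw [phi, dif_neg hG]; omega
      · intro hG heq
        obtain ⟨h1, h2⟩ := good_sigma_inv hG
        rw [phi_sigma h1 h2, phi_sigma (ihGA.1 h1) (ihGB.1 h2)] at heq
        have p1 : 1 ≤ phi A := phi_pos h1
        have p2 : 1 ≤ phi B := phi_pos h2
        have p3 : 1 ≤ phi A' := phi_pos (ihGA.1 h1)
        have p4 : 1 ≤ phi B' := phi_pos (ihGB.1 h2)
        have eA : phi A = phi A' := by nlinarith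
        have eB : phi B = phi B' := by nlinarith
        exact conv_sigma (ihConvA h1 eA) (ihConvB h2 eB)
  | trans h1 h2 ih1 ih2 =>
      obtain ⟨g1, l1, c1⟩ := ih1
      obtain ⟨g2, l2, c2⟩ := ih2
      refine ⟨g1.trans g2, l1.trans l2, ?_⟩
      intro hG heq
      have e1 : phi _ = phi _ := le_antisymm l1 (by omega)
      have e2 : phi _ = phi _ := le_antisymm l2 (by omega)
      exact Relation.EqvGen.trans _ _ _ (c1 hG e1) (c2 (g1.1 hG) e2)

lemma good_of_hasNF {T : Term} (h : HasNF T) : Good T := by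
  obtain ⟨N, h1, h2⟩ := h
  exact ⟨N, conv_of_reds h1, h2⟩

end ECC

/-- the cumulativity relation of ECC is well-founded on the set of
normalisable terms: there is no infinite strictly decreasing sequence `A 0 ≻ A 1 ≻ …`
in which every `A n` has a normal form. -/
theorem no_infinite_descending_chain_of_normalisable_terms :
    ¬ ∃ A : ℕ → ECC.Term,
        (∀ n, ECC.HasNF (A n)) ∧ (∀ n, ECC.SCum (A (n+1)) (A n)) := by
  rintro ⟨A, hNF, hSC⟩
  have key : ∀ n, ECC.phi (A (n+1)) < ECC.phi (A n) := by
    intro n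
    obtain ⟨hc, hnc⟩ := hSC n
    obtain ⟨_, hle, hconv⟩ := ECC.cum_key hc
    rcases lt_or_eq_of_le hle with h | h
    · exact h
    · exact absurd (hconv (ECC.good_of_hasNF (hNF (n+1))) h) hnc
  have mono : ∀ n, ECC.phi (A n) + n ≤ ECC.phi (A 0) := by
    intro n
    induction n with
    | zero => omega
    | succ m ih => have := key m; omega
  have := mono (ECC.phi (A 0) + 1)
  omega
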